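/- Given a finite-horizon Markov game with horizon H, if for each step h ∈ [H] and each state s an oracle outputs a per-state product policy π_h(s) that is an ε_{h,s}-approximate Nash equilibrium of the stage game with payoff matrices Q_{h,i,j}(s) (computed by exact backward induction with values V_{h+1,i} from π), then the resulting Markov policy π is a (Σ_{h∈[H]} max_{s∈S} ε_{h,s})-approximate Markov perfect Nash equilibrium of the Markov game, where approximation is measured by NE-Gap_h(M, π) = max_i max_s max_{π_i'} (V_{h,i}^{π_i', π_{-i}}(s) − V_{h,i}^π(s)). -/
import Mathlib


/-- Value iteration with approximate stage-game NE oracles in a finite-horizon Markov game: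
if at every step `h < H` and state `s` the per-state product policy `π h s` is an
`ε h s`-approximate NE of the stage game with payoffs `Q h i s` (computed by exact backward
induction), then for every player `i`, every deviation Markov policy `μ`, and every step
`h ≤ H`, the deviation gain is at most `∑_{h' < H} max_s ε h' s`. -/
theorem approx_stage_NE_gives_approx_Markov_NE {S N : Type*}
    [Fintype S] [Nonempty S] [Fintype N] [DecidableEq N]
    (A : N → Type*) [∀ i, Fintype (A i)] [∀ i, Nonempty (A i)]
    (H : ℕ)
    (P : ℕ → S → (∀ i, A i) → S → ℝ)
    (hPnn : ∀ h, h < H → ∀ s a s', 0 ≤ P h s a s')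
    (hPsum : ∀ h, h < H → ∀ s a, ∑ s', P h s a s' = 1)
    (r : ℕ → N → S → (∀ i, A i) → ℝ)
    -- the Markov product policy produced by the oracle
    (π : ∀ i : N, ℕ → S → A i → ℝ)
    (hπnn : ∀ i h s a, 0 ≤ π i h s a) (hπsum : ∀ i h s, ∑ a, π i h s a = 1)
    (ε : ℕ → S → ℝ)
    -- backward induction values and Q-functions under π
    (V : ℕ → N → S → ℝ) (Q : ℕ → N → S → (∀ i, A i) → ℝ)
    (hVend : ∀ i s, V H i s = 0)
    (hQ : ∀ h, h < H → ∀ i s a,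
      Q h i s a = r h i s a + ∑ s', P h s a s' * V (h + 1) i s')
    (hV : ∀ h, h < H → ∀ i s,
      V h i s = ∑ a : ∀ j, A j, (∏ j, π j h s (a j)) * Q h i s a)
    -- the oracle guarantee: π h s is an (ε h s)-approximate NE of the stage game Q h · s
    (hstage : ∀ h, h < H → ∀ (s : S) (i : N) (μ : A i → ℝ),
      (∀ b, 0 ≤ μ b) → (∑ b, μ b = 1) →
      (∑ a : ∀ j, A j, (μ (a i) * ∏ j ∈ Finset.univ.erase i, π j h s (a j)) * Q h i s a)
        - V h i s ≤ ε h s) :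
    -- conclusion: the NE-Gap at every step is at most ∑_{h∈[H]} max_s ε h s
    ∀ (i : N) (μ : ℕ → S → A i → ℝ),
      (∀ h s b, 0 ≤ μ h s b) → (∀ h s, ∑ b, μ h s b = 1) →
      ∀ W : ℕ → S → ℝ, (∀ s, W H s = 0) →
        (∀ h, h < H → ∀ s, W h s = ∑ a : ∀ j, A j,
            (μ h s (a i) * ∏ j ∈ Finset.univ.erase i, π j h s (a j)) *
            (r h i s a + ∑ s', P h s a s' * W (h + 1) s')) →
      ∀ h, h ≤ H → ∀ s : S,
        W h s - V h i s ≤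
          ∑ h' ∈ Finset.range H, Finset.univ.sup' Finset.univ_nonempty (ε h') := by

  intro i μdev hμnn hμsum W hWend hWrec
  set M : ℕ → ℝ := fun h' => Finset.univ.sup' Finset.univ_nonempty (ε h') with hMdef
  -- nonnegativity of the max stage gap at each step
  have hεnn : ∀ h', h' < H → ∀ s, (0:ℝ) ≤ ε h' s := by
    intro h' hh' s
    have hst := hstage h' hh' s i (π i h' s) (fun b => hπnn i h' s b) (hπsum i h' s)
    have heq : ∑ a : ∀ j, A j,
        (π i h' s (a i) * ∏ j ∈ Finset.univ.erase i, π j h' s (a j)) * Q h' i s a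
        = V h' i s := by
      rw [hV h' hh' i s]
      refine Finset.sum_congr rfl fun a _ => ?_
      rw [Finset.mul_prod_erase Finset.univ (fun j => π j h' s (a j)) (Finset.mem_univ i)]
    rw [heq] at hst
    linarith
  have hMnn : ∀ h', h' < H → (0:ℝ) ≤ M h' := by
    intro h' hh'
    obtain ⟨s⟩ := (inferInstance : Nonempty S)
    exact (hεnn h' hh' s).trans (Finset.le_sup' (ε h') (Finset.mem_univ s))
  -- the deviation weights sum to 1
  have hwsum : ∀ h s,
      ∑ a : ∀ j, A j, (μdev h s (a i) * ∏ j ∈ Finset.univ.erase i, π j h s (a j)) = 1 := by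
    intro h s
    set g : ∀ j, A j → ℝ := Function.update (fun j => π j h s) i (μdev h s) with hgdef
    have h1 : ∀ a : ∀ j, A j,
        μdev h s (a i) * ∏ j ∈ Finset.univ.erase i, π j h s (a j) = ∏ j, g j (a j) := by
      intro a
      rw [← Finset.mul_prod_erase Finset.univ (fun j => g j (a j)) (Finset.mem_univ i)]
      have hgi : g i = μdev h s := by rw [hgdef]; simp
      rw [hgi]
      congr 1
      refine Finset.prod_congr rfl fun j hj => ?_
      rw [hgdef]
      rw [Function.update_of_ne (Finset.ne_of_mem_erase hj)]
    rw [Finset.sum_congr rfl fun a _ => h1 a]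
    rw [← Fintype.piFinset_univ, ← Finset.prod_univ_sum]
    refine Finset.prod_eq_one fun j _ => ?_
    by_cases hji : j = i
    · subst hji
      have : g j = μdev h s := by rw [hgdef]; simp
      rw [this, hμsum h s]
    · have : g j = π j h s := Function.update_of_ne hji _ _
      rw [this, hπsum j h s]
  -- main backward induction
  have main : ∀ d h, h + d = H → ∀ s : S,
      W h s - V h i s ≤ ∑ h' ∈ Finset.Ico h H, M h' := by
    intro d
    induction d with
    | zero =>
      intro h hh s
      have hH : h = H := by omega
      subst hH
      simp [hWend s, hVend i s]
    | succ d ih =>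
      intro h hh s
      have hhH : h < H := by omega
      set w : (∀ j, A j) → ℝ :=
        fun a => μdev h s (a i) * ∏ j ∈ Finset.univ.erase i, π j h s (a j) with hwdef
      have hwnn : ∀ a, 0 ≤ w a := by
        intro a
        exact mul_nonneg (hμnn h s (a i))
          (Finset.prod_nonneg fun j _ => hπnn j h s (a j))
      have hw1 : ∑ a, w a = 1 := hwsum h s
      set B : ℝ := ∑ h' ∈ Finset.Ico (h+1) H, M h' with hBdef
      have hBnn : (0:ℝ) ≤ B :=
        Finset.sum_nonneg fun h' hh' => hMnn h' (Finset.mem_Ico.mp hh').2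
      have ihB : ∀ s', W (h+1) s' - V (h+1) i s' ≤ B :=
        fun s' => ih (h+1) (by omega) s'
      have hsplit : W h s = (∑ a, w a * Q h i s a)
          + ∑ a, w a * ∑ s', P h s a s' * (W (h+1) s' - V (h+1) i s') := by
        rw [hWrec h hhH s, ← Finset.sum_add_distrib]
        refine Finset.sum_congr rfl fun a _ => ?_
        rw [hQ h hhH i s a]
        have hsub : ∑ s', P h s a s' * (W (h+1) s' - V (h+1) i s')
            = (∑ s', P h s a s' * W (h+1) s') - ∑ s', P h s a s' * V (h+1) i s' := by
          rw [← Finset.sum_sub_distrib]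
          exact Finset.sum_congr rfl fun s' _ => by ring
        rw [hsub]
        ring
      have hterm1 : (∑ a, w a * Q h i s a) - V h i s ≤ M h := by
        have := hstage h hhH s i (μdev h s) (hμnn h s) (hμsum h s)
        exact this.trans (Finset.le_sup' (ε h) (Finset.mem_univ s))
      have hterm2 : ∑ a, w a * ∑ s', P h s a s' * (W (h+1) s' - V (h+1) i s') ≤ B := by
        have hinner : ∀ a, ∑ s', P h s a s' * (W (h+1) s' - V (h+1) i s') ≤ B := by
          intro a
          calc ∑ s', P h s a s' * (W (h+1) s' - V (h+1) i s')
              ≤ ∑ s', P h s a s' * B :=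
                Finset.sum_le_sum fun s' _ =>
                  mul_le_mul_of_nonneg_left (ihB s') (hPnn h hhH s a s')
            _ = B := by rw [← Finset.sum_mul, hPsum h hhH s a, one_mul]
        calc ∑ a, w a * ∑ s', P h s a s' * (W (h+1) s' - V (h+1) i s')
            ≤ ∑ a, w a * B :=
              Finset.sum_le_sum fun a _ =>
                mul_le_mul_of_nonneg_left (hinner a) (hwnn a)
          _ = B := by rw [← Finset.sum_mul, hw1, one_mul]
      have hIco : ∑ h' ∈ Finset.Ico h H, M h' = M h + B := by
        rw [hBdef]
        exact Finset.sum_eq_sum_Ico_succ_bot hhH M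
      rw [hIco]
      have : W h s - V h i s = ((∑ a, w a * Q h i s a) - V h i s)
          + ∑ a, w a * ∑ s', P h s a s' * (W (h+1) s' - V (h+1) i s') := by
        rw [hsplit]; ring
      rw [this]
      exact add_le_add hterm1 hterm2
  intro h hh s
  have h1 := main (H - h) h (by omega) s
  refine h1.trans ?_
  rw [Finset.range_eq_Ico]
  refine Finset.sum_le_sum_of_subset_of_nonneg
    (Finset.Ico_subset_Ico (Nat.zero_le h) le_rfl) fun h' hh' _ => ?_
  exact hMnn h' (Finset.mem_Ico.mp hh').2
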